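/- Let S : T → (nonempty subsets of X) be a discrete sieve on a Hausdorff space X and let g be an S-invariant weak selection for X. Then g is continuous at each pair {x,y} ∈ F₂(X) with β[x] ≠ β[y]: that is, whenever x <_g y and β[x] ≠ β[y], there exist open sets U ∋ x and V ∋ y with s <_g t for every s ∈ U, t ∈ V. -/
import Mathlib


open Topology

/-- A weak selection for `X`: a choice function on (unordered) pairs,
encoded as a symmetric map `X → X → X` picking one of its two arguments. -/
structure WeakSelection (X : Type*) where
  toFun : X → X → X
  mem_pair : ∀ x y, toFun x y = x ∨ toFun x y = y
  comm : ∀ x y, toFun x y = toFun y x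

namespace WeakSelection

variable {X : Type*}

/-- `x ≤_σ y` iff `σ {x, y} = x`. -/
def le (σ : WeakSelection X) (x y : X) : Prop := σ.toFun x y = x

/-- `x <_σ y` iff `x ≤_σ y` and `x ≠ y`. -/
def lt (σ : WeakSelection X) (x y : X) : Prop := σ.le x y ∧ x ≠ y

/-- The selection topology `T_σ`, generated by the `≤_σ`-open intervals. -/
def selTop (σ : WeakSelection X) : TopologicalSpace X :=
  TopologicalSpace.generateFrom
    {s : Set X | ∃ a : X, s = {y | σ.lt y a} ∨ s = {y | σ.lt a y}}

/-- Continuity of a weak selection on a topological space. -/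
def Continuous [TopologicalSpace X] (σ : WeakSelection X) : Prop :=
  ∀ x y : X, σ.lt x y → ∃ U V : Set X, IsOpen U ∧ IsOpen V ∧ x ∈ U ∧ y ∈ V ∧
    ∀ s ∈ U, ∀ t ∈ V, σ.lt s t

end WeakSelection

/-- `A <_g B` for subsets: `a <_g b` for all `a ∈ A`, `b ∈ B`. -/
def setLT {X : Type*} (g : WeakSelection X) (A B : Set X) : Prop :=
  ∀ a ∈ A, ∀ b ∈ B, g.lt a b

/-- `g` is the `P`-invariant weak selection `σ * h` determined by a weak
selection `σ` for the partition `P` (with block map `blk`) and weak selections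
`h p` for each block `p ∈ P`: on points of distinct blocks `g` is governed by
`σ`, and within a block `p` it agrees with `h p`. -/
def IsStar {X : Type*} (P : Set (Set X)) (blk : X → Set X) (hblk : ∀ x, blk x ∈ P)
    (σ : WeakSelection ↥P) (h : ∀ p : ↥P, WeakSelection ↥(p : Set X))
    (g : WeakSelection X) : Prop :=
  (∀ x y : X, blk x ≠ blk y →
      (g.lt x y ↔ σ.lt ⟨blk x, hblk x⟩ ⟨blk y, hblk y⟩)) ∧
  (∀ (p : ↥P) (x y : ↥(p : Set X)), blk ↑x = ↑p → blk ↑y = ↑p →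
      g.toFun ↑x ↑y = ↑((h p).toFun x y))

section Tree

variable {T : Type*} (tle : T → T → Prop)

/-- The strict relation associated to `tle`. -/
def tlt (a b : T) : Prop := tle a b ∧ a ≠ b

/-- The union of the first `n` levels of the tree `(T, tle)`. -/
def treeBelow : ℕ → Set T
  | 0 => ∅
  | n + 1 => treeBelow n ∪ {t | t ∉ treeBelow n ∧ ∀ s, tlt tle s t → s ∈ treeBelow n}

/-- The `n`-th level `T(n)`: the minimal elements of the complement of the
union of the previous levels. -/
def treeLevel (n : ℕ) : Set T :=
  {t | t ∉ treeBelow tle n ∧ ∀ s, tlt tle s t → s ∈ treeBelow tle n}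

/-- `node t`: the immediate successors of `t`. -/
def node (t : T) : Set T :=
  {s | tlt tle t s ∧ ¬∃ u, tlt tle t u ∧ tlt tle u s}

/-- `(T, tle)` is an `ω`-levelled tree: a partial order in which the set of
predecessors of each point is a finite chain and every point lies on some
(finite) level. -/
def IsOmegaTree : Prop :=
  (∀ a, tle a a) ∧ (∀ a b, tle a b → tle b a → a = b) ∧
  (∀ a b c, tle a b → tle b c → tle a c) ∧
  (∀ t, {s | tle s t}.Finite) ∧ (∀ t, IsChain tle {s | tle s t}) ∧
  (∀ t, ∃ n : ℕ, t ∈ treeLevel tle n)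

/-- The tree is pruned: every node has an immediate successor. -/
def Pruned : Prop := ∀ t : T, (node tle t).Nonempty

/-- The tree is anti-binary: neither the bottom level nor any node has exactly
two elements. -/
def AntiBinary : Prop :=
  (treeLevel tle 0).encard ≠ 2 ∧ ∀ t : T, (node tle t).encard ≠ 2

/-- A sieve on `X` indexed by the tree `(T, tle)`. -/
def IsSieve {X : Type*} (S : T → Set X) : Prop :=
  (∀ t, (S t).Nonempty) ∧ (⋃ t ∈ treeLevel tle 0, S t) = Set.univ ∧
  ∀ t, S t = ⋃ s ∈ node tle t, S s

/-- A discrete sieve: each level yields a discrete cover of `X`. -/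
def IsDiscreteSieve {X : Type*} [TopologicalSpace X] (S : T → Set X) : Prop :=
  IsSieve tle S ∧ ∀ n : ℕ,
    (⋃ t ∈ treeLevel tle n, S t) = Set.univ ∧
    ∀ x : X, ∃ N ∈ nhds x,
      {t | t ∈ treeLevel tle n ∧ (S t ∩ N).Nonempty}.Subsingleton

end Tree

/-- Proposition 5.2: if `S` is a discrete sieve on a Hausdorff space `X` and
`g` is an `S`-invariant weak selection (each level of the sieve is
`g`-decisive), then `g` is continuous at every pair `{x, y}` whose associated
branches `β[x] = {t | x ∈ S t}` and `β[y]` differ. -/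
theorem stmt18 {X : Type*} {T : Type*} [TopologicalSpace X] [T2Space X]
    (tle : T → T → Prop) (htree : IsOmegaTree tle)
    (S : T → Set X) (hS : IsDiscreteSieve tle S)
    (g : WeakSelection X)
    (hinv : ∀ n : ℕ, ∀ t ∈ treeLevel tle n, ∀ t' ∈ treeLevel tle n,
      S t ≠ S t' → setLT g (S t) (S t') ∨ setLT g (S t') (S t))
    (x y : X) (hxy : g.lt x y)
    (hbranch : {t | x ∈ S t} ≠ {t | y ∈ S t}) :
    ∃ U V : Set X, IsOpen U ∧ IsOpen V ∧ x ∈ U ∧ y ∈ V ∧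
      ∀ s ∈ U, ∀ t ∈ V, g.lt s t := by
  -- Find a tree node on which the branches of x and y differ.
  have hex : ∃ t, (x ∈ S t ∧ y ∉ S t) ∨ (y ∈ S t ∧ x ∉ S t) := by
    by_contra h
    push_neg at h
    apply hbranch
    ext t
    simp only [Set.mem_setOf_eq]
    have := h t
    tauto
  obtain ⟨t0, ht0⟩ := hex
  obtain ⟨n, hn⟩ := htree.2.2.2.2.2 t0
  obtain ⟨hcov, hdisc⟩ := hS.2 n
  have hcov' : ∀ z : X, ∃ t ∈ treeLevel tle n, z ∈ S t := by
    intro z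
    have : z ∈ (⋃ t ∈ treeLevel tle n, S t) := hcov ▸ Set.mem_univ z
    simpa using this
  obtain ⟨tx, htx, hxtx, ty, hty, hyty, hne⟩ :
      ∃ tx ∈ treeLevel tle n, x ∈ S tx ∧ ∃ ty ∈ treeLevel tle n, y ∈ S ty ∧ S tx ≠ S ty := by
    rcases ht0 with ⟨hx0, hy0⟩ | ⟨hy0, hx0⟩
    · obtain ⟨ty, hty, hyty⟩ := hcov' y
      exact ⟨t0, hn, hx0, ty, hty, hyty, fun h => hy0 (h ▸ hyty)⟩
    · obtain ⟨tx, htx, hxtx⟩ := hcov' x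
      exact ⟨tx, htx, hxtx, t0, hn, hy0, fun h => hx0 (h.symm ▸ hxtx)⟩
  have hlt : setLT g (S tx) (S ty) := by
    rcases hinv n tx htx ty hty hne with h | h
    · exact h
    · exfalso
      have h1 : g.toFun y x = y := (h y hyty x hxtx).1
      have h2 : g.toFun x y = x := hxy.1
      exact hxy.2 (h2.symm.trans ((g.comm x y).trans h1))
  obtain ⟨Nx, hNx, hNxss⟩ := hdisc x
  obtain ⟨Ny, hNy, hNyss⟩ := hdisc y
  obtain ⟨U, hUN, hUo, hxU⟩ := mem_nhds_iff.mp hNx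
  obtain ⟨V, hVN, hVo, hyV⟩ := mem_nhds_iff.mp hNy
  have hUsub : U ⊆ S tx := by
    intro s hs
    obtain ⟨t', ht', hst'⟩ := hcov' s
    have h1 : t' ∈ {t | t ∈ treeLevel tle n ∧ (S t ∩ Nx).Nonempty} :=
      ⟨ht', ⟨s, hst', hUN hs⟩⟩
    have h2 : tx ∈ {t | t ∈ treeLevel tle n ∧ (S t ∩ Nx).Nonempty} :=
      ⟨htx, ⟨x, hxtx, mem_of_mem_nhds hNx⟩⟩
    rw [hNxss h1 h2] at hst'
    exact hst'
  have hVsub : V ⊆ S ty := by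
    intro s hs
    obtain ⟨t', ht', hst'⟩ := hcov' s
    have h1 : t' ∈ {t | t ∈ treeLevel tle n ∧ (S t ∩ Ny).Nonempty} :=
      ⟨ht', ⟨s, hst', hVN hs⟩⟩
    have h2 : ty ∈ {t | t ∈ treeLevel tle n ∧ (S t ∩ Ny).Nonempty} :=
      ⟨hty, ⟨y, hyty, mem_of_mem_nhds hNy⟩⟩
    rw [hNyss h1 h2] at hst'
    exact hst'
  exact ⟨U, V, hUo, hVo, hxU, hyV, fun s hs t ht => hlt s (hUsub hs) t (hVsub ht)⟩
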